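/- arXiv:2409.11559 — 2 statements merged into one kernel-verified Lean document; each statement's English description precedes it below -/
import Mathlib

section
/- Let s_1, ..., s_n be integers and let S = s_1 + ... + s_n. Then the integer n·S + Σ_{i=1}^n gcd(s_i, S) is even. -/
lemma gcd_parity_aux (a b : ℤ) :
    ((Int.gcd a b : ℤ) : ZMod 2) = (a : ZMod 2) + b + a * b := by
  have h0 : ∀ x : ℤ, Even x → (x : ZMod 2) = 0 := by
    intro x hx
    exact (ZMod.intCast_zmod_eq_zero_iff_dvd x 2).2 hx.two_dvd
  have h1 : ∀ x : ℤ, Odd x → (x : ZMod 2) = 1 := by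
    intro x hx
    rcases hx with ⟨k, hk⟩
    subst hk; push_cast
    rw [show ((2 : ZMod 2)) = 0 by decide]; ring
  rcases Int.even_or_odd a with ha | ha <;> rcases Int.even_or_odd b with hb | hb
  · have hg : Even ((Int.gcd a b : ℤ)) :=
      (even_iff_two_dvd).2 (Int.dvd_coe_gcd ha.two_dvd hb.two_dvd)
    rw [h0 _ hg, h0 _ ha, h0 _ hb]; ring
  · have hg : Odd ((Int.gcd a b : ℤ)) := by
      rw [Int.not_even_iff_odd.symm, even_iff_two_dvd]
      intro h
      exact (Int.not_even_iff_odd.2 hb) ((even_iff_two_dvd).2 (h.trans (Int.gcd_dvd_right _ _)))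
    rw [h1 _ hg, h0 _ ha, h1 _ hb]; ring
  · have hg : Odd ((Int.gcd a b : ℤ)) := by
      rw [Int.not_even_iff_odd.symm, even_iff_two_dvd]
      intro h
      exact (Int.not_even_iff_odd.2 ha) ((even_iff_two_dvd).2 (h.trans (Int.gcd_dvd_left _ _)))
    rw [h1 _ hg, h1 _ ha, h0 _ hb]; ring
  · have hg : Odd ((Int.gcd a b : ℤ)) := by
      rw [Int.not_even_iff_odd.symm, even_iff_two_dvd]
      intro h
      exact (Int.not_even_iff_odd.2 ha) ((even_iff_two_dvd).2 (h.trans (Int.gcd_dvd_left _ _)))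
    rw [h1 _ hg, h1 _ ha, h1 _ hb]; decide

theorem stmt2 (n : ℕ) (s : Fin n → ℤ) :
    Even ((n : ℤ) * (∑ i, s i) + ∑ i, (Int.gcd (s i) (∑ j, s j) : ℤ)) := by
  rw [even_iff_two_dvd, show (2:ℤ) = ((2:ℕ):ℤ) by norm_num, ← ZMod.intCast_zmod_eq_zero_iff_dvd]
  push_cast
  set S : ZMod 2 := ∑ j, ((s j : ZMod 2)) with hS
  have hgcd : ∑ i, ((Int.gcd (s i) (∑ j, s j) : ZMod 2))
      = ∑ i, ((s i : ZMod 2) + S + (s i) * S) := by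
    refine Finset.sum_congr rfl fun i _ => ?_
    rw [show ((Int.gcd (s i) (∑ j, s j) : ZMod 2)) = ((Int.gcd (s i) (∑ j, s j) : ℤ) : ZMod 2) by push_cast; rfl, gcd_parity_aux]
    push_cast [hS]
    rfl
  rw [hgcd]
  simp only [Finset.sum_add_distrib, ← Finset.sum_mul, Finset.sum_const,
    Finset.card_univ, Fintype.card_fin, nsmul_eq_mul, ← hS]
  have hSS : ∀ x : ZMod 2, x * x = x := by decide
  have h2 : ∀ x : ZMod 2, x + x = 0 := by decide
  rw [hSS]
  calc (n : ZMod 2) * S + (S + (n : ZMod 2) * S + S)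
      = ((n : ZMod 2) * S + (n : ZMod 2) * S) + (S + S) := by ring
    _ = 0 := by rw [h2, h2, add_zero]
end

section
/- Let T be a decorated tree. Then M(T) + F(T) is an even integer. Consequently, the genus g(T) = (2 - M(T) - F(T))/2 and the δ-invariant δ(T) = (F(T) - M(T))/2 are integers. -/
open Finset
open scoped Classical

/-- A decorated tree: a finite tree on cells `C = V ∪ A`, where `isArrow`
distinguishes arrows (of valency 1) from vertices.  `f a` is the decoration of
the arrow `a`, and `q x y` is the decoration of the edge `{x,y}` near `x`.
Decorations at arrows are `1`; decorations near a vertex are pairwise coprime. -/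
structure DecTree where
  C : Type
  [fintypeC : Fintype C]
  [decEqC : DecidableEq C]
  G : SimpleGraph C
  [decAdj : DecidableRel G.Adj]
  isTree : G.IsTree
  isArrow : C → Prop
  [decArrow : DecidablePred isArrow]
  arrowValency : ∀ a, isArrow a → G.degree a = 1
  f : C → ℤ
  q : C → C → ℤ
  q_arrow : ∀ a x, isArrow a → G.Adj a x → q a x = 1
  q_coprime : ∀ v x y, ¬ isArrow v → G.Adj v x → G.Adj v y → x ≠ y →
    IsCoprime (q v x) (q v y)

attribute [instance] DecTree.fintypeC DecTree.decEqC DecTree.decAdj DecTree.decArrow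

namespace DecTree

variable (T : DecTree)

/-- The unique path between two cells of the tree. -/
noncomputable def path (x y : T.C) : T.G.Walk x y :=
  (T.isTree.existsUnique_path x y).exists.choose

/-- `xva T v a` is the quantity `x_{v,a}`: the decoration `f a` times the
product of the decorations `q(ε,u)` over all edges `ε = {u,w}` incident to the
path from `v` to `a` (i.e. `u` on the path, `w` off the path). -/
noncomputable def xva (v a : T.C) : ℤ :=
  T.f a * ∏ uw ∈ Finset.univ.filter (fun uw : T.C × T.C =>
      uw.1 ∈ (T.path v a).support ∧ T.G.Adj uw.1 uw.2 ∧
        uw.2 ∉ (T.path v a).support),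
    T.q uw.1 uw.2

/-- `xhat T v a` is `x̂_{v,a}`: as `x_{v,a}` but omitting edges incident to `v`. -/
noncomputable def xhat (v a : T.C) : ℤ :=
  T.f a * ∏ uw ∈ Finset.univ.filter (fun uw : T.C × T.C =>
      uw.1 ∈ (T.path v a).support ∧ uw.1 ≠ v ∧ T.G.Adj uw.1 uw.2 ∧
        uw.2 ∉ (T.path v a).support),
    T.q uw.1 uw.2

/-- The multiplicity `N_v = Σ_{α ∈ A∖A₀} x_{v,α}`. -/
noncomputable def N (v : T.C) : ℤ :=
  ∑ a ∈ Finset.univ.filter (fun a => T.isArrow a ∧ T.f a ≠ 0), T.xva v a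

/-- The multiplicity of the tree, `M(T) = -Σ_{v ∈ V∪A₀} N_v (δ_v - 2)`. -/
noncomputable def M : ℤ :=
  - ∑ v ∈ Finset.univ.filter (fun v => ¬ T.isArrow v ∨ T.f v = 0),
      T.N v * ((T.G.degree v : ℤ) - 2)

/-- `p(α, e_α) = Σ_{β ∈ (A∖A₀)∖{α}} x̂_{α,β}` for an arrow `α`. -/
noncomputable def parrow (a : T.C) : ℤ :=
  ∑ b ∈ Finset.univ.filter (fun b => T.isArrow b ∧ T.f b ≠ 0 ∧ b ≠ a), T.xhat a b

/-- `F(T) = Σ_{α ∈ A∖A₀} gcd(f(α), p(α, e_α))`. -/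
noncomputable def F : ℤ :=
  ∑ a ∈ Finset.univ.filter (fun a => T.isArrow a ∧ T.f a ≠ 0),
    (Int.gcd (T.f a) (T.parrow a) : ℤ)

/-- `Q(e,x)` for `e = {x,y}`: product of the decorations near `x` of the
other edges incident to `x`. -/
noncomputable def Qe (x y : T.C) : ℤ :=
  ∏ w ∈ (T.G.neighborFinset x).erase y, T.q x w

/-- `lt T v0 x y` means `x < y` in the order rooted at `v0`:
`x ≠ y` and `x` lies on the path from `v0` to `y`. -/
def lt (v0 x y : T.C) : Prop :=
  x ≠ y ∧ x ∈ (T.path v0 y).support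

/-- `v0` is a root: a vertex all of whose edge decorations are `1`, such that
for every other vertex `v`, all edges at `v` not on the path `γ_{v0,v}` have
decoration `≥ 1` near `v`, at most one of them being `> 1`. -/
def IsRoot (v0 : T.C) : Prop :=
  ¬ T.isArrow v0 ∧
  (∀ x, T.G.Adj v0 x → T.q v0 x = 1) ∧
  ∀ v, ¬ T.isArrow v → v ≠ v0 →
    (∀ x, T.G.Adj v x → s(v, x) ∉ (T.path v0 v).edges → 1 ≤ T.q v x) ∧
    (∀ x y, T.G.Adj v x → T.G.Adj v y →
      s(v, x) ∉ (T.path v0 v).edges → s(v, y) ∉ (T.path v0 v).edges →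
      1 < T.q v x → 1 < T.q v y → x = y)

/-- The tree has negative determinants: `det(e) < 0` for every edge `e`
joining two vertices. -/
def HasNegDet : Prop :=
  ∀ x y, ¬ T.isArrow x → ¬ T.isArrow y → T.G.Adj x y →
    T.q x y * T.q y x - T.Qe x y * T.Qe y x < 0

/-- A subset `S` of the cells is connected if every path whose endpoints lie
in `S` lies entirely in `S`. -/
def ConnectedSet (S : Set T.C) : Prop :=
  ∀ x y, x ∈ S → y ∈ S → ∀ u, u ∈ (T.path x y).support → u ∈ S

/-- `φ(x,y)`: product of `q(ε,u)` over cells `u ≠ x` of the path from `x` to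
`y` and edges `ε` incident to `u` not lying on the path. -/
noncomputable def phi (x y : T.C) : ℤ :=
  ∏ uw ∈ Finset.univ.filter (fun uw : T.C × T.C =>
      uw.1 ∈ (T.path x y).support ∧ uw.1 ≠ x ∧ T.G.Adj uw.1 uw.2 ∧
        uw.2 ∉ (T.path x y).support),
    T.q uw.1 uw.2

/-! ### Auxiliary development for the parity theorem -/

section Aux

open SimpleGraph Walk

/-- the product part of `xva`, without the `f a` factor. -/
noncomputable def prA (v a : T.C) : ℤ :=
  ∏ uw ∈ Finset.univ.filter (fun uw : T.C × T.C =>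
      uw.1 ∈ (T.path v a).support ∧ T.G.Adj uw.1 uw.2 ∧
        uw.2 ∉ (T.path v a).support),
    T.q uw.1 uw.2

lemma xva_eq (v a : T.C) : T.xva v a = T.f a * T.prA v a := rfl

lemma path_isPath (x y : T.C) : (T.path x y).IsPath :=
  (T.isTree.existsUnique_path x y).exists.choose_spec

lemma path_eq {x y : T.C} (p : T.G.Walk x y) (hp : p.IsPath) : p = T.path x y :=
  (T.isTree.existsUnique_path x y).unique hp (T.path_isPath x y)

lemma path_self (x : T.C) : T.path x x = Walk.nil :=
  (T.path_eq _ IsPath.nil).symm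

lemma path_adj {x y : T.C} (h : T.G.Adj x y) :
    T.path x y = Walk.cons h Walk.nil := by
  refine (T.path_eq _ ?_).symm
  rw [Walk.cons_isPath_iff]
  exact ⟨IsPath.nil, by simp [h.ne]⟩

lemma path_reverse (x y : T.C) : (T.path x y).reverse = T.path y x :=
  T.path_eq _ (T.path_isPath x y).reverse

lemma mem_support_symm {u x y : T.C} :
    u ∈ (T.path x y).support ↔ u ∈ (T.path y x).support := by
  rw [← T.path_reverse x y, Walk.support_reverse, List.mem_reverse]

lemma path_decomp {u x y : T.C} (h : u ∈ (T.path x y).support) :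
    T.path x y = (T.path x u).append (T.path u y) := by
  have h1 := T.path_isPath x y
  have h2 := Walk.take_spec (T.path x y) h
  rw [T.path_eq _ (h1.takeUntil h), T.path_eq _ (h1.dropUntil h)] at h2
  exact h2.symm

lemma path_cons_of_adj {u y v : T.C} (h : T.G.Adj u y) (hy : y ∈ (T.path u v).support) :
    T.path u v = Walk.cons h (T.path y v) := by
  rw [T.path_decomp hy, T.path_adj h]
  simp

lemma adj_support_unique {u v y c : T.C} (hy : T.G.Adj u y) (hc : T.G.Adj u c)
    (hys : y ∈ (T.path u v).support) (hcs : c ∈ (T.path u v).support) : y = c := by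
  have h1 := T.path_cons_of_adj hy hys
  have h2 := T.path_cons_of_adj hc hcs
  have h3 : (T.path y v).support = (T.path c v).support := by
    have h4 := congrArg Walk.support (h1.symm.trans h2)
    simpa using h4
  rw [(T.path y v).support_eq_cons, (T.path c v).support_eq_cons] at h3
  exact (List.cons_eq_cons.mp h3).1

lemma path_cons_not_mem {w u v : T.C} (h : T.G.Adj w u) (hw : w ∉ (T.path u v).support) :
    T.path w v = Walk.cons h (T.path u v) := by
  refine (T.path_eq _ ?_).symm
  rw [Walk.cons_isPath_iff]
  exact ⟨T.path_isPath u v, hw⟩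

lemma not_mem_support_of_branch {w u v c : T.C} (hwu : T.G.Adj w u) (hc : T.G.Adj u c)
    (hcw : c ≠ w) (hcs : c ∈ (T.path u v).support) : w ∉ (T.path u v).support := by
  intro hw
  exact hcw (T.adj_support_unique hc hwu.symm hcs hw)

/-- second vertex of a nontrivial path -/
lemma exists_snd {u v : T.C} (huv : u ≠ v) :
    ∃ c, T.G.Adj u c ∧ c ∈ (T.path u v).support := by
  have hn : ¬ (T.path u v).Nil := Walk.not_nil_of_ne huv
  refine ⟨(T.path u v).getVert 1, Walk.adj_snd hn, ?_⟩
  rw [Walk.mem_support_iff_exists_getVert]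
  refine ⟨1, rfl, ?_⟩
  have := Walk.not_nil_iff_lt_length.mp hn
  omega

/-- the branch at `u` seen from `w`: cells `v` whose path from `w` passes through `u`. -/
noncomputable def Sb (w u : T.C) : Finset T.C :=
  Finset.univ.filter (fun v => u ∈ (T.path w v).support)

lemma Sb_mem {w u v : T.C} : v ∈ T.Sb w u ↔ u ∈ (T.path w v).support := by
  simp [Sb]

lemma mem_Sb_self {w u : T.C} (h : T.G.Adj w u) : u ∈ T.Sb w u := by
  rw [T.Sb_mem, T.path_adj h]; simp

/-- The local parity sum over the branch at `u` seen from `w`. -/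
noncomputable def J (w u : T.C) : ZMod 2 :=
  ∑ v ∈ T.Sb w u, (T.G.degree v : ZMod 2) * ((T.phi w v : ZMod 2))

lemma phi_adj {w u : T.C} (h : T.G.Adj w u) :
    T.phi w u = ∏ y ∈ (T.G.neighborFinset u).erase w, T.q u y := by
  unfold phi
  have hset : Finset.univ.filter (fun uw : T.C × T.C =>
      uw.1 ∈ (T.path w u).support ∧ uw.1 ≠ w ∧ T.G.Adj uw.1 uw.2 ∧
        uw.2 ∉ (T.path w u).support)
      = ((T.G.neighborFinset u).erase w).image (fun y => (u, y)) := by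
    ext ⟨x, y⟩
    simp only [Finset.mem_filter, Finset.mem_univ, true_and, Finset.mem_image,
      Finset.mem_erase, SimpleGraph.mem_neighborFinset, T.path_adj h, Walk.support_cons,
      Walk.support_nil, List.mem_cons, List.mem_singleton]
    constructor
    · rintro ⟨hx, hxw, hadj, hy⟩
      have hxu : x = u := by
        rcases hx with h1 | h1
        · exact absurd h1 hxw
        · simpa using h1
      subst hxu
      refine ⟨y, ⟨fun hyw => hy (Or.inl hyw), hadj⟩, rfl⟩
    · rintro ⟨z, ⟨hzw, hadj⟩, hz⟩
      injection hz with h1 h2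
      subst h1; subst h2
      refine ⟨Or.inr (by simp), h.ne', hadj, ?_⟩
      rintro (h1 | h1)
      · exact hzw h1
      · exact hadj.ne' (by simpa using h1)
  rw [hset, Finset.prod_image]
  intro z _ z' _ hzz
  simpa using hzz

lemma phi_cons {w u c v : T.C} (hwu : T.G.Adj w u) (huc : T.G.Adj u c) (hcw : c ≠ w)
    (hcs : c ∈ (T.path u v).support) :
    T.phi w v = (∏ y ∈ ((T.G.neighborFinset u).erase w).erase c, T.q u y) * T.phi u v := by
  have hw : w ∉ (T.path u v).support := T.not_mem_support_of_branch hwu huc hcw hcs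
  have hp : T.path w v = Walk.cons hwu (T.path u v) := T.path_cons_not_mem hwu hw
  have hsupp : (T.path w v).support = w :: (T.path u v).support := by
    rw [hp, Walk.support_cons]
  have hnbr : ∀ y, T.G.Adj u y → y ∈ (T.path u v).support → y = c := by
    intro y hy hys
    exact T.adj_support_unique hy huc hys hcs
  have hnadj : ∀ x, x ∈ (T.path u v).support → x ≠ u → ¬ T.G.Adj x w := by
    intro x hx hxu hadj
    have hxs : x ∈ (T.path w v).support := by
      rw [hsupp]; exact List.mem_cons_of_mem _ hx
    have hus : u ∈ (T.path w v).support := by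
      rw [hsupp]; exact List.mem_cons_of_mem _ (Walk.start_mem_support _)
    exact hxu (T.adj_support_unique hadj.symm hwu hxs hus)
  unfold phi
  have hset : Finset.univ.filter (fun uw : T.C × T.C =>
      uw.1 ∈ (T.path w v).support ∧ uw.1 ≠ w ∧ T.G.Adj uw.1 uw.2 ∧
        uw.2 ∉ (T.path w v).support)
      = (((T.G.neighborFinset u).erase w).erase c).image (fun y => (u, y))
        ∪ Finset.univ.filter (fun uw : T.C × T.C =>
          uw.1 ∈ (T.path u v).support ∧ uw.1 ≠ u ∧ T.G.Adj uw.1 uw.2 ∧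
            uw.2 ∉ (T.path u v).support) := by
    ext ⟨x, y⟩
    simp only [Finset.mem_filter, Finset.mem_univ, true_and, Finset.mem_union, Finset.mem_image,
      Finset.mem_erase, SimpleGraph.mem_neighborFinset, hsupp, List.mem_cons]
    constructor
    · rintro ⟨hx, hxw, hadj, hy⟩
      push_neg at hy
      obtain ⟨hyw, hys⟩ := hy
      have hx' : x ∈ (T.path u v).support := by
        rcases hx with h1 | h1
        · exact absurd h1 hxw
        · exact h1
      by_cases hxu : x = u
      · subst hxu
        refine Or.inl ⟨y, ⟨?_, hyw, hadj⟩, rfl⟩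
        intro hyc; subst hyc
        exact hys hcs
      · exact Or.inr ⟨hx', hxu, hadj, hys⟩
    · rintro (⟨z, ⟨hzc, hzw, hadj⟩, hz⟩ | ⟨hx, hxu, hadj, hy⟩)
      · injection hz with h1 h2
        subst h1; subst h2
        refine ⟨Or.inr (Walk.start_mem_support _), hwu.ne', hadj, ?_⟩
        rintro (h1 | h1)
        · exact hzw h1
        · exact hzc (hnbr _ hadj h1)
      · refine ⟨Or.inr hx, fun hxw => hw (hxw ▸ hx), hadj, ?_⟩
        rintro (h1 | h1)
        · subst h1; exact hnadj _ hx hxu hadj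
        · exact hy h1
  have hdisj : Disjoint
      ((((T.G.neighborFinset u).erase w).erase c).image (fun y => (u, y)))
      (Finset.univ.filter (fun uw : T.C × T.C =>
          uw.1 ∈ (T.path u v).support ∧ uw.1 ≠ u ∧ T.G.Adj uw.1 uw.2 ∧
            uw.2 ∉ (T.path u v).support)) := by
    rw [Finset.disjoint_left]
    rintro ⟨x, y⟩ hmem hmem'
    simp only [Finset.mem_image] at hmem
    obtain ⟨z, _, hz⟩ := hmem
    injection hz with h1 h2
    simp only [Finset.mem_filter] at hmem'
    exact hmem'.2.2.1 h1.symm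
  rw [hset, Finset.prod_union hdisj, Finset.prod_image]
  intro z _ z' _ hzz
  simpa using hzz

lemma Sb_subset {w u c : T.C} (hwu : T.G.Adj w u) (huc : T.G.Adj u c) (hcw : c ≠ w) :
    T.Sb u c ⊆ (T.Sb w u).erase u := by
  intro v hv
  rw [T.Sb_mem] at hv
  have hw : w ∉ (T.path u v).support := T.not_mem_support_of_branch hwu huc hcw hv
  have hp : T.path w v = Walk.cons hwu (T.path u v) := T.path_cons_not_mem hwu hw
  rw [Finset.mem_erase, T.Sb_mem, hp, Walk.support_cons]
  constructor
  · rintro rfl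
    rw [T.path_self] at hv
    simp only [Walk.support_nil, List.mem_singleton] at hv
    exact huc.ne' hv
  · exact List.mem_cons_of_mem _ (Walk.start_mem_support _)

lemma Sb_erase_eq {w u : T.C} (hwu : T.G.Adj w u) :
    (T.Sb w u).erase u = ((T.G.neighborFinset u).erase w).biUnion (fun c => T.Sb u c) := by
  ext v
  constructor
  · intro hv
    obtain ⟨hvu, hv'⟩ := Finset.mem_erase.mp hv
    rw [T.Sb_mem] at hv'
    obtain ⟨c, huc, hcs⟩ := T.exists_snd (Ne.symm hvu)
    have hp2 : T.path w v = Walk.cons hwu (T.path u v) := by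
      rw [T.path_decomp hv', T.path_adj hwu]; simp
    have hw : w ∉ (T.path u v).support := by
      have hip := T.path_isPath w v
      rw [hp2, Walk.cons_isPath_iff] at hip
      exact hip.2
    have hcw : c ≠ w := fun h => hw (h ▸ hcs)
    rw [Finset.mem_biUnion]
    exact ⟨c, Finset.mem_erase.mpr ⟨hcw, (SimpleGraph.mem_neighborFinset _ _ _).mpr huc⟩,
      T.Sb_mem.mpr hcs⟩
  · intro hv
    obtain ⟨c, hc, hvc⟩ := Finset.mem_biUnion.mp hv
    obtain ⟨hcw, hcn⟩ := Finset.mem_erase.mp hc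
    rw [SimpleGraph.mem_neighborFinset] at hcn
    exact T.Sb_subset hwu hcn hcw hvc

lemma Sb_disj {u c c' : T.C} (huc : T.G.Adj u c) (huc' : T.G.Adj u c') (hne : c ≠ c') :
    Disjoint (T.Sb u c) (T.Sb u c') := by
  rw [Finset.disjoint_left]
  intro v hv hv'
  exact hne (T.adj_support_unique huc huc' (T.Sb_mem.mp hv) (T.Sb_mem.mp hv'))

lemma J_rec {w u : T.C} (hwu : T.G.Adj w u) :
    T.J w u = (T.G.degree u : ZMod 2)
        * (∏ y ∈ (T.G.neighborFinset u).erase w, ((T.q u y : ZMod 2)))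
      + ∑ c ∈ (T.G.neighborFinset u).erase w,
          (∏ y ∈ ((T.G.neighborFinset u).erase w).erase c, ((T.q u y : ZMod 2))) * T.J u c := by
  have hu : u ∈ T.Sb w u := T.mem_Sb_self hwu
  have hdisj : (↑((T.G.neighborFinset u).erase w) : Set T.C).PairwiseDisjoint (T.Sb u) := by
    intro c hc c' hc' hne
    simp only [Finset.mem_coe, Finset.mem_erase, SimpleGraph.mem_neighborFinset] at hc hc'
    exact T.Sb_disj hc.2 hc'.2 hne
  have hstep : ∀ c ∈ (T.G.neighborFinset u).erase w,
      ∑ v ∈ T.Sb u c, (T.G.degree v : ZMod 2) * ((T.phi w v : ZMod 2))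
        = (∏ y ∈ ((T.G.neighborFinset u).erase w).erase c, ((T.q u y : ZMod 2))) * T.J u c := by
    intro c hc
    obtain ⟨hcw, hcn⟩ := Finset.mem_erase.mp hc
    rw [SimpleGraph.mem_neighborFinset] at hcn
    rw [J, Finset.mul_sum]
    refine Finset.sum_congr rfl fun v hv => ?_
    rw [T.phi_cons hwu hcn hcw (T.Sb_mem.mp hv)]
    push_cast
    ring
  rw [J, ← Finset.add_sum_erase _ _ hu, T.Sb_erase_eq hwu, Finset.sum_biUnion hdisj,
    Finset.sum_congr rfl hstep, T.phi_adj hwu]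
  push_cast
  ring

lemma bit_lemma {α : Type*} [DecidableEq α] (s : Finset α) (b : α → ZMod 2)
    (hb : ∀ y ∈ s, ∀ z ∈ s, y ≠ z → b y = 1 ∨ b z = 1) :
    ((s.card : ZMod 2) + 1) * ∏ y ∈ s, b y
      + ∑ c ∈ s, ∏ y ∈ s.erase c, b y = 1 := by
  by_cases h : ∀ y ∈ s, b y = 1
  · rw [Finset.prod_eq_one h]
    have h2 : ∀ c ∈ s, ∏ y ∈ s.erase c, b y = 1 := fun c _ =>
      Finset.prod_eq_one (fun y hy => h y (Finset.mem_of_mem_erase hy))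
    rw [Finset.sum_congr rfl h2, Finset.sum_const, nsmul_eq_mul, mul_one, mul_one]
    have h3 : ∀ x : ZMod 2, x + 1 + x = 1 := by decide
    exact h3 _
  · push_neg at h
    obtain ⟨c₀, hc₀, hbc₀⟩ := h
    have hbc₀' : b c₀ = 0 := by
      have h4 : ∀ x : ZMod 2, x ≠ 1 → x = 0 := by decide
      exact h4 _ hbc₀
    rw [Finset.prod_eq_zero hc₀ hbc₀', mul_zero, zero_add, Finset.sum_eq_single c₀]
    · refine Finset.prod_eq_one (fun y hy => ?_)
      obtain ⟨hyne, hys⟩ := Finset.mem_erase.mp hy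
      rcases hb y hys c₀ hc₀ hyne with h1 | h1
      · exact h1
      · exact absurd h1 hbc₀
    · intro c hc hne
      exact Finset.prod_eq_zero (Finset.mem_erase.mpr ⟨Ne.symm hne, hc₀⟩) hbc₀'
    · intro h'; exact absurd hc₀ h'

lemma J_one : ∀ n, ∀ w u : T.C, T.G.Adj w u → (T.Sb w u).card ≤ n → T.J w u = 1 := by
  intro n
  induction n with
  | zero =>
    intro w u hwu hcard
    have := Finset.card_pos.mpr ⟨u, T.mem_Sb_self hwu⟩
    omega
  | succ n ih =>
    intro w u hwu hcard
    rw [T.J_rec hwu]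
    have hih : ∀ c ∈ (T.G.neighborFinset u).erase w, T.J u c = 1 := by
      intro c hc
      obtain ⟨hcw, hcn⟩ := Finset.mem_erase.mp hc
      rw [SimpleGraph.mem_neighborFinset] at hcn
      refine ih u c hcn ?_
      have h1 : (T.Sb u c).card ≤ ((T.Sb w u).erase u).card :=
        Finset.card_le_card (T.Sb_subset hwu hcn hcw)
      have h2 : ((T.Sb w u).erase u).card < (T.Sb w u).card :=
        Finset.card_erase_lt_of_mem (T.mem_Sb_self hwu)
      omega
    rw [Finset.sum_congr rfl (fun c hc => by rw [hih c hc, mul_one])]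
    have hdeg : T.G.degree u = ((T.G.neighborFinset u).erase w).card + 1 := by
      rw [← SimpleGraph.card_neighborFinset_eq_degree,
        Finset.card_erase_add_one ((SimpleGraph.mem_neighborFinset _ _ _).mpr hwu.symm)]
    rw [hdeg]
    push_cast
    refine bit_lemma _ _ ?_
    intro y hy z hz hyz
    obtain ⟨hyw, hyn⟩ := Finset.mem_erase.mp hy
    obtain ⟨hzw, hzn⟩ := Finset.mem_erase.mp hz
    by_cases harr : T.isArrow u
    · exfalso
      have hdeg1 := T.arrowValency u harr
      rw [← SimpleGraph.card_neighborFinset_eq_degree] at hdeg1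
      have h1lt : 1 < (T.G.neighborFinset u).card :=
        Finset.one_lt_card.mpr ⟨y, hyn, w, (SimpleGraph.mem_neighborFinset _ _ _).mpr hwu.symm, hyw⟩
      omega
    · rw [SimpleGraph.mem_neighborFinset] at hyn hzn
      by_contra hcon
      push_neg at hcon
      obtain ⟨hy1, hz1⟩ := hcon
      have h4 : ∀ x : ZMod 2, x ≠ 1 → x = 0 := by decide
      have h2y : (2:ℤ) ∣ T.q u y := (ZMod.intCast_zmod_eq_zero_iff_dvd _ 2).mp (h4 _ hy1)
      have h2z : (2:ℤ) ∣ T.q u z := (ZMod.intCast_zmod_eq_zero_iff_dvd _ 2).mp (h4 _ hz1)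
      obtain ⟨aa, bb, hab⟩ := T.q_coprime u y z harr hyn hzn hyz
      have : (2:ℤ) ∣ 1 := hab ▸ dvd_add (h2y.mul_left aa) (h2z.mul_left bb)
      norm_num at this

/-- the unique neighbour of an arrow -/
lemma arrow_nbr {a : T.C} (ha : T.isArrow a) :
    ∃ n₀, T.G.Adj a n₀ ∧ ∀ y, T.G.Adj a y → y = n₀ := by
  have hdeg := T.arrowValency a ha
  rw [← SimpleGraph.card_neighborFinset_eq_degree] at hdeg
  obtain ⟨n₀, hn₀⟩ := Finset.card_eq_one.mp hdeg
  refine ⟨n₀, ?_, fun y hy => ?_⟩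
  · rw [← SimpleGraph.mem_neighborFinset, hn₀]; simp
  · have : y ∈ ({n₀} : Finset T.C) := hn₀ ▸ (SimpleGraph.mem_neighborFinset _ _ _).mpr hy
    simpa using this

lemma nbr_mem_support {a v n₀ : T.C} (hv : v ≠ a)
    (han : T.G.Adj a n₀) (huniq : ∀ y, T.G.Adj a y → y = n₀) :
    n₀ ∈ (T.path a v).support := by
  obtain ⟨c, hac, hcs⟩ := T.exists_snd (Ne.symm hv)
  rwa [huniq c hac] at hcs

lemma prA_self {a : T.C} (ha : T.isArrow a) : T.prA a a = 1 := by
  obtain ⟨n₀, han, huniq⟩ := T.arrow_nbr ha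
  unfold prA
  have hset : Finset.univ.filter (fun uw : T.C × T.C =>
      uw.1 ∈ (T.path a a).support ∧ T.G.Adj uw.1 uw.2 ∧
        uw.2 ∉ (T.path a a).support) = {(a, n₀)} := by
    ext ⟨x, y⟩
    simp only [Finset.mem_filter, Finset.mem_univ, true_and, Finset.mem_singleton,
      T.path_self a, Walk.support_nil, List.mem_singleton]
    constructor
    · rintro ⟨hx, hadj, hy⟩
      subst hx
      rw [huniq y hadj]
    · rintro h
      injection h with h1 h2
      subst h1; subst h2
      exact ⟨rfl, han, han.ne'⟩
  rw [hset, Finset.prod_singleton]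
  exact T.q_arrow a n₀ ha han

lemma prA_eq_phi {a v : T.C} (ha : T.isArrow a) (hv : v ≠ a) :
    T.prA v a = T.phi a v := by
  obtain ⟨n₀, han, huniq⟩ := T.arrow_nbr ha
  unfold prA phi
  refine Finset.prod_congr ?_ (fun _ _ => rfl)
  ext ⟨x, y⟩
  simp only [Finset.mem_filter, Finset.mem_univ, true_and]
  constructor
  · rintro ⟨hx, hadj, hy⟩
    have hx' : x ∈ (T.path a v).support := T.mem_support_symm.mp hx
    have hy' : y ∉ (T.path a v).support := fun h => hy (T.mem_support_symm.mp h)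
    refine ⟨hx', ?_, hadj, hy'⟩
    intro hxa; subst hxa
    exact hy' (by rw [huniq y hadj]; exact T.nbr_mem_support hv han huniq)
  · rintro ⟨hx, _, hadj, hy⟩
    exact ⟨T.mem_support_symm.mp hx, hadj, fun h => hy (T.mem_support_symm.mp h)⟩

/-- The core parity lemma: for an arrow `a`, the sum `Σ_v δ_v · P(v,a)` is even. -/
lemma core {a : T.C} (ha : T.isArrow a) :
    ∑ v ∈ Finset.univ, (T.G.degree v : ZMod 2) * ((T.prA v a : ZMod 2)) = 0 := by
  obtain ⟨n₀, han, huniq⟩ := T.arrow_nbr ha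
  have hSb : T.Sb a n₀ = Finset.univ.erase a := by
    ext v
    rw [T.Sb_mem, Finset.mem_erase]
    constructor
    · intro h
      refine ⟨?_, Finset.mem_univ v⟩
      rintro rfl
      rw [T.path_self] at h
      simp only [Walk.support_nil, List.mem_singleton] at h
      exact han.ne' h
    · rintro ⟨hv, _⟩
      exact T.nbr_mem_support hv han huniq
  rw [← Finset.add_sum_erase _ _ (Finset.mem_univ a)]
  have h1 : (T.G.degree a : ZMod 2) * ((T.prA a a : ZMod 2)) = 1 := by
    rw [T.arrowValency a ha, T.prA_self ha]
    norm_num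
  have h2 : ∑ v ∈ Finset.univ.erase a, (T.G.degree v : ZMod 2) * ((T.prA v a : ZMod 2))
      = T.J a n₀ := by
    rw [J, hSb]
    refine Finset.sum_congr rfl fun v hv => ?_
    rw [T.prA_eq_phi ha (Finset.mem_erase.mp hv).1]
  rw [h1, h2, T.J_one (T.Sb a n₀).card a n₀ han le_rfl]
  decide

lemma zmod_gcd (m k : ℤ) :
    ((Int.gcd m k : ℤ) : ZMod 2)
      = (m : ZMod 2) * (k : ZMod 2) + (m : ZMod 2) + (k : ZMod 2) := by
  have hd : ∀ x : ZMod 2, x = 0 ∨ x = 1 := by decide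
  have hg : ((Int.gcd m k : ℤ) : ZMod 2) = 0 ↔ ((m : ZMod 2) = 0 ∧ (k : ZMod 2) = 0) := by
    rw [ZMod.intCast_zmod_eq_zero_iff_dvd, ZMod.intCast_zmod_eq_zero_iff_dvd,
      ZMod.intCast_zmod_eq_zero_iff_dvd]
    constructor
    · intro h; exact ⟨h.trans (Int.gcd_dvd_left m k), h.trans (Int.gcd_dvd_right m k)⟩
    · rintro ⟨h1, h2⟩; exact Int.dvd_coe_gcd h1 h2
  rcases hd (m : ZMod 2) with hm | hm <;> rcases hd (k : ZMod 2) with hk | hk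
  · rw [hm, hk, hg.mpr ⟨hm, hk⟩]; decide
  · have hG : ((Int.gcd m k : ℤ) : ZMod 2) = 1 := by
      rcases hd ((Int.gcd m k : ℤ) : ZMod 2) with h | h
      · exact absurd (hg.mp h).2 (by rw [hk]; decide)
      · exact h
    rw [hG, hm, hk]; decide
  · have hG : ((Int.gcd m k : ℤ) : ZMod 2) = 1 := by
      rcases hd ((Int.gcd m k : ℤ) : ZMod 2) with h | h
      · exact absurd (hg.mp h).1 (by rw [hm]; decide)
      · exact h
    rw [hG, hm, hk]; decide
  · have hG : ((Int.gcd m k : ℤ) : ZMod 2) = 1 := by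
      rcases hd ((Int.gcd m k : ℤ) : ZMod 2) with h | h
      · exact absurd (hg.mp h).1 (by rw [hm]; decide)
      · exact h
    rw [hG, hm, hk]; decide

lemma sum_sum_symm {α : Type*} [DecidableEq α] (s : Finset α) (h : α → α → ZMod 2)
    (hsymm : ∀ a b, h a b = h b a) :
    ∑ a ∈ s, ∑ b ∈ s, h a b = ∑ a ∈ s, h a a := by
  have key : ∑ p ∈ (s ×ˢ s).filter (fun p => ¬ p.1 = p.2), h p.1 p.2 = 0 := by
    apply Finset.sum_involution (fun p _ => Prod.swap p)
    · intro p _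
      show h p.1 p.2 + h p.2 p.1 = 0
      rw [hsymm p.1 p.2]
      have h2 : ∀ x : ZMod 2, x + x = 0 := by decide
      exact h2 _
    · intro p hp _
      have hne := (Finset.mem_filter.mp hp).2
      intro hsw
      exact hne (congrArg Prod.snd hsw)
    · intro p hp
      simp only [Finset.mem_filter, Finset.mem_product] at hp ⊢
      exact ⟨⟨hp.1.2, hp.1.1⟩, fun h' => hp.2 h'.symm⟩
    · intro p hp
      rfl
  have himg : (s ×ˢ s).filter (fun p => p.1 = p.2) = s.image (fun a => (a, a)) := by
    ext ⟨x, y⟩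
    simp only [Finset.mem_filter, Finset.mem_product, Finset.mem_image]
    constructor
    · rintro ⟨⟨hx, _⟩, heq⟩
      exact ⟨x, hx, by rw [heq]⟩
    · rintro ⟨z, hz, hzz⟩
      cases hzz
      exact ⟨⟨hz, hz⟩, rfl⟩
  rw [← Finset.sum_product',
    ← Finset.sum_filter_add_sum_filter_not (s ×ˢ s) (fun p => p.1 = p.2), key, add_zero,
    himg, Finset.sum_image (fun a _ b _ hab => by injection hab)]

lemma xhat_eq_xva {a b : T.C} (ha : T.isArrow a) (hb : b ≠ a) :
    T.xhat a b = T.xva a b := by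
  obtain ⟨n₀, han, huniq⟩ := T.arrow_nbr ha
  unfold xhat xva
  congr 1
  refine Finset.prod_congr ?_ (fun _ _ => rfl)
  ext ⟨x, y⟩
  simp only [Finset.mem_filter, Finset.mem_univ, true_and]
  constructor
  · rintro ⟨hx, _, hadj, hy⟩
    exact ⟨hx, hadj, hy⟩
  · rintro ⟨hx, hadj, hy⟩
    refine ⟨hx, ?_, hadj, hy⟩
    intro hxa; subst hxa
    exact hy (by rw [huniq y hadj]; exact T.nbr_mem_support hb han huniq)

lemma parrow_eq {a : T.C} (ha : T.isArrow a) (hfa : T.f a ≠ 0) :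
    T.parrow a = T.N a - T.f a := by
  have hfilter : Finset.univ.filter (fun b => T.isArrow b ∧ T.f b ≠ 0 ∧ b ≠ a)
      = (Finset.univ.filter (fun b => T.isArrow b ∧ T.f b ≠ 0)).erase a := by
    ext b
    simp only [Finset.mem_filter, Finset.mem_univ, true_and, Finset.mem_erase]
    tauto
  have haf : a ∈ Finset.univ.filter (fun b => T.isArrow b ∧ T.f b ≠ 0) := by
    simp [ha, hfa]
  have hNa : T.N a = T.xva a a
      + ∑ b ∈ (Finset.univ.filter (fun b => T.isArrow b ∧ T.f b ≠ 0)).erase a, T.xva a b :=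
    (Finset.add_sum_erase _ _ haf).symm
  rw [parrow, hfilter,
    Finset.sum_congr rfl (fun b hb => T.xhat_eq_xva ha (Finset.mem_erase.mp hb).1), hNa,
    T.xva_eq, T.prA_self ha]
  ring

lemma prA_symm (v a : T.C) : T.prA v a = T.prA a v := by
  unfold prA
  refine Finset.prod_congr ?_ (fun _ _ => rfl)
  ext ⟨x, y⟩
  simp only [Finset.mem_filter, Finset.mem_univ, true_and]
  constructor
  · rintro ⟨hx, hadj, hy⟩
    exact ⟨T.mem_support_symm.mp hx, hadj, fun h => hy (T.mem_support_symm.mp h)⟩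
  · rintro ⟨hx, hadj, hy⟩
    exact ⟨T.mem_support_symm.mp hx, hadj, fun h => hy (T.mem_support_symm.mp h)⟩

end Aux

end DecTree

/-- For every decorated tree `T`, the number `M(T) + F(T)` is even;
consequently the genus `g(T) = (2 - M(T) - F(T))/2` and the δ-invariant
`δ(T) = (F(T) - M(T))/2` are integers. -/
theorem stmt11 (T : DecTree) :
    Even (T.M + T.F) ∧
    (∃ g : ℤ, 2 * g = 2 - T.M - T.F) ∧
    (∃ d : ℤ, 2 * d = T.F - T.M) := by
  classical
  have key : ((T.M + T.F : ℤ) : ZMod 2) = 0 := by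
    have hN : ∀ v : T.C, ((T.N v : ZMod 2))
        = ∑ b ∈ Finset.univ.filter (fun a => T.isArrow a ∧ T.f a ≠ 0),
            (T.f b : ZMod 2) * ((T.prA v b : ZMod 2)) := by
      intro v
      rw [DecTree.N]
      push_cast
      refine Finset.sum_congr rfl fun b _ => ?_
      rw [T.xva_eq]
      push_cast
      ring
    have hM : (T.M : ZMod 2)
        = ∑ v ∈ Finset.univ.filter (fun v => ¬ T.isArrow v ∨ T.f v = 0),
            (T.N v : ZMod 2) * (T.G.degree v : ZMod 2) := by
      rw [DecTree.M]
      push_cast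
      have hneg : ∀ x : ZMod 2, -x = x := by decide
      rw [hneg]
      refine Finset.sum_congr rfl fun v _ => ?_
      rw [(by decide : (2 : ZMod 2) = 0), sub_zero]
    have hpred : Finset.univ.filter (fun v => ¬ (¬ T.isArrow v ∨ T.f v = 0))
        = Finset.univ.filter (fun a => T.isArrow a ∧ T.f a ≠ 0) := by
      ext x
      simp only [Finset.mem_filter, Finset.mem_univ, true_and]
      tauto
    have hsplit := Finset.sum_filter_add_sum_filter_not Finset.univ
      (fun v => ¬ T.isArrow v ∨ T.f v = 0)
      (fun v => (T.N v : ZMod 2) * (T.G.degree v : ZMod 2))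
    rw [hpred] at hsplit
    have hswap : ∀ x y z : ZMod 2, x + y = z → x = z + y := by decide
    have hM' : (T.M : ZMod 2)
        = (∑ v ∈ Finset.univ, (T.N v : ZMod 2) * (T.G.degree v : ZMod 2))
          + ∑ a ∈ Finset.univ.filter (fun a => T.isArrow a ∧ T.f a ≠ 0),
              (T.N a : ZMod 2) * (T.G.degree a : ZMod 2) := by
      rw [hM]
      exact hswap _ _ _ hsplit
    have hF : (T.F : ZMod 2) = ∑ a ∈ Finset.univ.filter (fun a => T.isArrow a ∧ T.f a ≠ 0),
        ((T.f a : ZMod 2) * (T.N a : ZMod 2) + (T.f a : ZMod 2) + (T.N a : ZMod 2)) := by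
      rw [DecTree.F]
      push_cast
      refine Finset.sum_congr rfl fun a ha => ?_
      obtain ⟨haA, hfa⟩ := (Finset.mem_filter.mp ha).2
      have hgcd := DecTree.zmod_gcd (T.f a) (T.parrow a)
      push_cast at hgcd
      rw [hgcd, T.parrow_eq haA hfa]
      push_cast
      have h5 : ∀ x y : ZMod 2, x * (y - x) + x + (y - x) = x * y + x + y := by decide
      exact h5 _ _
    have hU : ∑ v ∈ Finset.univ, (T.N v : ZMod 2) * (T.G.degree v : ZMod 2) = 0 := by
      have h1 : ∀ v, (T.N v : ZMod 2) * (T.G.degree v : ZMod 2)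
          = ∑ b ∈ Finset.univ.filter (fun a => T.isArrow a ∧ T.f a ≠ 0),
              (T.f b : ZMod 2) * ((T.G.degree v : ZMod 2) * ((T.prA v b : ZMod 2))) := by
        intro v
        rw [hN v, Finset.sum_mul]
        exact Finset.sum_congr rfl fun b _ => by ring
      rw [Finset.sum_congr rfl (fun v _ => h1 v), Finset.sum_comm]
      refine Finset.sum_eq_zero fun b hb => ?_
      obtain ⟨hbA, _⟩ := (Finset.mem_filter.mp hb).2
      rw [← Finset.mul_sum, T.core hbA, mul_zero]
    have hsq : ∀ x : ZMod 2, x * x = x := by decide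
    have hdiag : ∑ a ∈ Finset.univ.filter (fun a => T.isArrow a ∧ T.f a ≠ 0),
          (T.f a : ZMod 2) * (T.N a : ZMod 2)
        = ∑ a ∈ Finset.univ.filter (fun a => T.isArrow a ∧ T.f a ≠ 0),
            (T.f a : ZMod 2) := by
      have h1 : ∀ a, (T.f a : ZMod 2) * (T.N a : ZMod 2)
          = ∑ b ∈ Finset.univ.filter (fun a => T.isArrow a ∧ T.f a ≠ 0),
              (T.f a : ZMod 2) * ((T.f b : ZMod 2) * ((T.prA a b : ZMod 2))) := by
        intro a
        rw [hN a, Finset.mul_sum]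
      rw [Finset.sum_congr rfl fun a _ => h1 a,
        DecTree.sum_sum_symm _
          (fun a b => (T.f a : ZMod 2) * ((T.f b : ZMod 2) * ((T.prA a b : ZMod 2))))
          (fun a b => by beta_reduce; rw [T.prA_symm a b]; ring)]
      refine Finset.sum_congr rfl fun a ha => ?_
      obtain ⟨haA, _⟩ := (Finset.mem_filter.mp ha).2
      rw [T.prA_self haA]
      push_cast
      rw [mul_one, hsq]
    push_cast
    rw [hM', hF, hU, zero_add,
      Finset.sum_congr rfl (fun a ha => by
        obtain ⟨haA, _⟩ := (Finset.mem_filter.mp ha).2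
        rw [T.arrowValency a haA]
        norm_num :
        ∀ a ∈ Finset.univ.filter (fun a => T.isArrow a ∧ T.f a ≠ 0),
          (T.N a : ZMod 2) * (T.G.degree a : ZMod 2) = (T.N a : ZMod 2)),
      ← Finset.sum_add_distrib,
      Finset.sum_congr rfl (fun a _ => (by
        have h6 : ∀ x y : ZMod 2, x + (y * x + y + x) = y * x + y := by decide
        exact h6 _ _ :
        (T.N a : ZMod 2) + ((T.f a : ZMod 2) * (T.N a : ZMod 2) + (T.f a : ZMod 2)
          + (T.N a : ZMod 2))
          = (T.f a : ZMod 2) * (T.N a : ZMod 2) + (T.f a : ZMod 2))),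
      Finset.sum_add_distrib, hdiag]
    have hzz : ∀ x : ZMod 2, x + x = 0 := by decide
    exact hzz _
  have hdvd : (2:ℤ) ∣ (T.M + T.F) := (ZMod.intCast_zmod_eq_zero_iff_dvd _ 2).mp key
  obtain ⟨k, hk⟩ := hdvd
  exact ⟨⟨k, by omega⟩, ⟨1 - k, by omega⟩, ⟨k - T.M, by omega⟩⟩
end
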